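/- Let G = ⊕_p ℤ_(p) be the direct sum, over all prime numbers p, of the localizations ℤ_(p) of ℤ at p (viewed as subrings of ℚ consisting of fractions with denominator prime to p). Then for every prime l and every r ≥ 1, the quotient G/l^r G is a cyclic group of order l^r, and consequently the l-adic completion G^{∧l} = lim_r G/l^r G is isomorphic, as an additive group, to the group ℤ_l of l-adic integers. -/

import Mathlib

/-- The localization `ℤ_(p)` of `ℤ` at a prime `p`, viewed as the additive subgroup
of `ℚ` consisting of fractions whose denominator is prime to `p`. -/
def primeLocal (p : Nat.Primes) : AddSubgroup ℚ where
  carrier := {q | ¬ (p : ℕ) ∣ q.den}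
  zero_mem' := by
    simp only [Set.mem_setOf_eq, Rat.den_zero, Nat.dvd_one]
    exact p.prop.ne_one
  add_mem' := by
    intro a b ha hb h
    rcases p.prop.dvd_mul.mp (dvd_trans h (Rat.add_den_dvd a b)) with h' | h'
    · exact ha h'
    · exact hb h'
  neg_mem' := by
    intro a ha
    simpa only [Set.mem_setOf_eq, Rat.den_neg_eq_den] using ha

/-- The group `G = ⊕_p ℤ_(p)`, the direct sum over all primes of the localizations
of `ℤ` at `p`. -/
abbrev sumOfLocalizations : Type :=
  DirectSum Nat.Primes fun p => primeLocal p

/-- The subgroup `n·G` of an abelian group `G`, the range of multiplication by `n`. -/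
def smulRange (G : Type*) [AddCommGroup G] (n : ℕ) : AddSubgroup G :=
  (smulAddHom ℕ G n).range

/-- The natural projection `G/l^(r+1)G → G/l^r G`. -/
def transitionMap (G : Type*) [AddCommGroup G] (l r : ℕ) :
    G ⧸ smulRange G (l ^ (r + 1)) →+ G ⧸ smulRange G (l ^ r) :=
  QuotientAddGroup.map _ _ (AddMonoidHom.id G) (by
    rintro x ⟨y, rfl⟩
    exact ⟨l • y, by simp [smulAddHom_apply, pow_succ, mul_smul]⟩)

/-- The `l`-adic completion `G^{∧l} = lim_r G/l^r G` of an abelian group `G`,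
realized as the group of compatible sequences in `∏_r G/l^r G`. -/
def adicCompletion (G : Type*) [AddCommGroup G] (l : ℕ) :
    AddSubgroup (∀ r : ℕ, G ⧸ smulRange G (l ^ r)) where
  carrier := {a | ∀ r : ℕ, transitionMap G l r (a (r + 1)) = a r}
  zero_mem' := fun r => by simp
  add_mem' := by
    intro a b ha hb r
    simp only [Pi.add_apply, map_add, ha r, hb r]
  neg_mem' := by
    intro a ha r
    simp only [Pi.neg_apply, map_neg, ha r]

namespace Stmt8Aux

variable (l : ℕ) [hl : Fact l.Prime]

local notation "G" => sumOfLocalizations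

/-- The prime `l` as an element of `Nat.Primes`. -/
def lp : Nat.Primes := ⟨l, hl.out⟩

instance instNeZeroPow (r : ℕ) : NeZero (l ^ r) := ⟨pow_ne_zero r hl.out.ne_zero⟩

theorem rat_key (a b : ℚ) :
    (a + b).num * ((a.den : ℤ) * (b.den : ℤ)) =
      (a.num * (b.den : ℤ) + b.num * (a.den : ℤ)) * ((a + b).den : ℤ) := by
  have ha : ((a.den : ℚ)) ≠ 0 := Nat.cast_ne_zero.mpr a.den_nz
  have hb : ((b.den : ℚ)) ≠ 0 := Nat.cast_ne_zero.mpr b.den_nz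
  have hab : (((a + b).den : ℚ)) ≠ 0 := Nat.cast_ne_zero.mpr (a + b).den_nz
  have h1 : (a.num : ℚ) = a * a.den := (div_eq_iff ha).mp (Rat.num_div_den a)
  have h2 : (b.num : ℚ) = b * b.den := (div_eq_iff hb).mp (Rat.num_div_den b)
  have h3 : ((a + b).num : ℚ) = (a + b) * (a + b).den :=
    (div_eq_iff hab).mp (Rat.num_div_den (a + b))
  have key : (((a + b).num * ((a.den : ℤ) * (b.den : ℤ)) : ℤ) : ℚ) =
      (((a.num * (b.den : ℤ) + b.num * (a.den : ℤ)) * ((a + b).den : ℤ) : ℤ) : ℚ) := by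
    push_cast
    rw [h1, h2, h3]
    ring
  exact_mod_cast key

theorem zmod_combo {m : ℕ} {n na nb d da db : ZMod m} (hd : IsUnit d) (hda : IsUnit da)
    (hdb : IsUnit db) (key : n * (da * db) = (na * db + nb * da) * d) :
    n * d⁻¹ = na * da⁻¹ + nb * db⁻¹ := by
  refine (hd.mul (hda.mul hdb)).mul_left_cancel ?_
  calc d * (da * db) * (n * d⁻¹) = (d * d⁻¹) * (n * (da * db)) := by ring
    _ = n * (da * db) := by rw [ZMod.mul_inv_of_unit d hd, one_mul]
    _ = (na * db + nb * da) * d := key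
    _ = (da * da⁻¹) * (na * db * d) + (db * db⁻¹) * (nb * da * d) := by
        rw [ZMod.mul_inv_of_unit da hda, ZMod.mul_inv_of_unit db hdb]; ring
    _ = d * (da * db) * (na * da⁻¹ + nb * db⁻¹) := by ring

theorem den_unit {r : ℕ} {q : ℚ} (h : ¬ l ∣ q.den) : IsUnit ((q.den : ZMod (l ^ r))) := by
  rw [ZMod.isUnit_iff_coprime]
  exact Nat.Coprime.pow_right r
    (Nat.coprime_comm.mp ((Nat.Prime.coprime_iff_not_dvd hl.out).mpr h))

/-- The component maps `ℤ_(p) →+ ZMod (l^r)`: on the `l`-component it sends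
`a/b` to `a * b⁻¹`, on all other components it is zero. -/
def psi (r : ℕ) (p : Nat.Primes) : primeLocal p →+ ZMod (l ^ r) :=
  if h : (p : ℕ) = l then
    { toFun := fun q => ((q : ℚ).num : ZMod (l ^ r)) * (((q : ℚ).den : ZMod (l ^ r)))⁻¹
      map_zero' := by simp
      map_add' := by
        intro a b
        have ha : ¬ l ∣ (a : ℚ).den := by rw [← h]; exact a.2
        have hb : ¬ l ∣ (b : ℚ).den := by rw [← h]; exact b.2
        have hab : ¬ l ∣ ((a : ℚ) + (b : ℚ)).den := by
          rw [← h]; exact add_mem a.2 b.2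
        have key := congrArg (fun z : ℤ => (z : ZMod (l ^ r))) (rat_key (a : ℚ) (b : ℚ))
        push_cast at key
        simp only [AddSubgroup.coe_add]
        exact zmod_combo (den_unit l hab) (den_unit l ha) (den_unit l hb) key }
  else 0

theorem psi_lp_apply (r : ℕ) (x : primeLocal (lp l)) :
    psi l r (lp l) x = ((x : ℚ).num : ZMod (l ^ r)) * (((x : ℚ).den : ZMod (l ^ r)))⁻¹ := by
  have : ((lp l : ℕ)) = l := rfl
  rw [psi, dif_pos this]; rfl

theorem psi_ne {p : Nat.Primes} (hp : (p : ℕ) ≠ l) (r : ℕ) : psi l r p = 0 := by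
  rw [psi, dif_neg hp]

/-- The homomorphism `G →+ ZMod (l^r)`. -/
def phi (r : ℕ) : G →+ ZMod (l ^ r) := DirectSum.toAddMonoid (psi l r)

theorem phi_of (r : ℕ) (p : Nat.Primes) (x : primeLocal p) :
    phi l r (DirectSum.of (fun p => primeLocal p) p x) = psi l r p x :=
  DirectSum.toAddMonoid_of _ _ _

theorem one_mem_lp : (1 : ℚ) ∈ primeLocal (lp l) := by
  show ¬ l ∣ (1 : ℚ).den
  simpa using hl.out.ne_one

theorem phi_surj (r : ℕ) : Function.Surjective (phi l r) := by
  intro x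
  refine ⟨x.val • DirectSum.of (fun p => primeLocal p) (lp l) ⟨1, one_mem_lp l⟩, ?_⟩
  rw [map_nsmul, phi_of, psi_lp_apply]
  simp only [Rat.num_ofNat, Int.cast_one, Rat.den_ofNat, Nat.cast_one, ZMod.inv_one, mul_one]
  rw [nsmul_eq_mul, mul_one, ZMod.natCast_zmod_val]

theorem div_mem {p : Nat.Primes} (hp : (p : ℕ) ≠ l) (r : ℕ) (x : primeLocal p) :
    ∃ y : primeLocal p, (l ^ r) • y = x := by
  have hl0 : ((l : ℚ)) ^ r ≠ 0 := pow_ne_zero _ (Nat.cast_ne_zero.mpr hl.out.ne_zero)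
  set v : ℚ := (x : ℚ) / (l : ℚ) ^ r with hv
  have hval : v = ((x : ℚ).num : ℚ) / ((((x : ℚ).den * l ^ r : ℕ) : ℤ) : ℚ) := by
    rw [hv]
    conv_lhs => rw [← Rat.num_div_den (x : ℚ)]
    rw [div_div]
    norm_cast
  have hdenZ : (v.den : ℤ) ∣ (((x : ℚ).den * l ^ r : ℕ) : ℤ) := by
    have h := Rat.den_dvd (x : ℚ).num (((x : ℚ).den * l ^ r : ℕ) : ℤ)
    rw [Rat.divInt_eq_div, ← hval] at h
    exact h
  have hden : v.den ∣ (x : ℚ).den * l ^ r := Int.ofNat_dvd.mp hdenZ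
  have hmem : ¬ (p : ℕ) ∣ v.den := by
    intro hdvd
    rcases (Nat.Prime.dvd_mul p.2).mp (hdvd.trans hden) with h | h
    · exact x.2 h
    · exact hp ((Nat.prime_dvd_prime_iff_eq p.2 hl.out).mp (p.2.dvd_of_dvd_pow h))
  refine ⟨⟨v, hmem⟩, ?_⟩
  apply Subtype.ext
  show ((((l ^ r) • (⟨v, hmem⟩ : primeLocal p)) : primeLocal p) : ℚ) = (x : ℚ)
  rw [AddSubgroup.coe_nsmul]
  show (l ^ r : ℕ) • v = (x : ℚ)
  have hcast : ((l ^ r : ℕ) : ℚ) = (l : ℚ) ^ r := by push_cast; ring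
  rw [nsmul_eq_mul, hv, hcast, mul_comm, div_mul_cancel₀ _ hl0]

theorem div_mem_l (r : ℕ) (x : primeLocal (lp l)) (hx : ((l : ℤ)) ^ r ∣ (x : ℚ).num) :
    ∃ y : primeLocal (lp l), (l ^ r) • y = x := by
  have hl0 : ((l : ℚ)) ^ r ≠ 0 := pow_ne_zero _ (Nat.cast_ne_zero.mpr hl.out.ne_zero)
  have hd0 : (((x : ℚ).den : ℚ)) ≠ 0 := Nat.cast_ne_zero.mpr (x : ℚ).den_nz
  set a' : ℤ := (x : ℚ).num / (l : ℤ) ^ r with ha'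
  have hmul : (l : ℤ) ^ r * a' = (x : ℚ).num := Int.mul_ediv_cancel' hx
  set v : ℚ := (a' : ℚ) / (((x : ℚ).den : ℤ) : ℚ) with hv
  have hdenZ : (v.den : ℤ) ∣ (((x : ℚ).den : ℕ) : ℤ) := by
    have h := Rat.den_dvd a' (((x : ℚ).den : ℕ) : ℤ)
    rw [Rat.divInt_eq_div, ← hv] at h
    exact h
  have hden : v.den ∣ (x : ℚ).den := Int.ofNat_dvd.mp hdenZ
  have hmem : v ∈ primeLocal (lp l) := by
    intro hdvd
    exact x.2 (dvd_trans hdvd hden)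
  refine ⟨⟨v, hmem⟩, ?_⟩
  apply Subtype.ext
  rw [AddSubgroup.coe_nsmul]
  show (l ^ r : ℕ) • v = (x : ℚ)
  calc (l ^ r : ℕ) • v = ((((l : ℤ) ^ r * a' : ℤ) : ℚ)) / (((x : ℚ).den : ℕ) : ℚ) := by
        rw [nsmul_eq_mul, hv]; push_cast; ring
    _ = (x : ℚ) := by rw [hmul, Rat.num_div_den]

theorem smulRange_le_ker (r : ℕ) : smulRange G (l ^ r) ≤ (phi l r).ker := by
  rintro g ⟨y, rfl⟩
  rw [AddMonoidHom.mem_ker]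
  show phi l r ((l ^ r) • y) = 0
  rw [map_nsmul, nsmul_eq_mul]
  rw [show ((l ^ r : ℕ) : ZMod (l ^ r)) = 0 from ZMod.natCast_self _, zero_mul]

theorem exists_rep (r : ℕ) (g : G) :
    ∃ c : primeLocal (lp l),
      g - DirectSum.of (fun p => primeLocal p) (lp l) c ∈ smulRange G (l ^ r) := by
  induction g using DirectSum.induction_on with
  | zero => exact ⟨0, by simpa using zero_mem (smulRange G (l ^ r))⟩
  | of p x =>
    by_cases hp : p = lp l
    · subst hp; exact ⟨x, by simpa using zero_mem (smulRange G (l ^ r))⟩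
    · have hpl : (p : ℕ) ≠ l := fun h => hp (Subtype.ext h)
      obtain ⟨y, hy⟩ := div_mem l hpl r x
      refine ⟨0, ?_⟩
      rw [map_zero, sub_zero, ← hy, map_nsmul]
      exact ⟨DirectSum.of (fun p => primeLocal p) p y, by simp⟩
  | add a b iha ihb =>
    obtain ⟨ca, hca⟩ := iha
    obtain ⟨cb, hcb⟩ := ihb
    refine ⟨ca + cb, ?_⟩
    have h := add_mem hca hcb
    have e : a - DirectSum.of (fun p => primeLocal p) (lp l) ca +
        (b - DirectSum.of (fun p => primeLocal p) (lp l) cb) =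
        a + b - DirectSum.of (fun p => primeLocal p) (lp l) (ca + cb) := by
      rw [map_add]; abel
    rwa [e] at h

theorem ker_eq (r : ℕ) : (phi l r).ker = smulRange G (l ^ r) := by
  refine le_antisymm ?_ (smulRange_le_ker l r)
  intro g hg
  rw [AddMonoidHom.mem_ker] at hg
  obtain ⟨c, hc⟩ := exists_rep l r g
  have h0 : phi l r (g - DirectSum.of (fun p => primeLocal p) (lp l) c) = 0 := by
    have := smulRange_le_ker l r hc
    rwa [AddMonoidHom.mem_ker] at this
  have hcph : phi l r (DirectSum.of (fun p => primeLocal p) (lp l) c) = 0 := by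
    rw [map_sub, hg, zero_sub, neg_eq_zero] at h0
    exact h0
  rw [phi_of, psi_lp_apply] at hcph
  have hd : ¬ l ∣ (c : ℚ).den := c.2
  have hu := den_unit l (r := r) hd
  have hnum0 : (((c : ℚ).num : ZMod (l ^ r))) = 0 := by
    calc ((c : ℚ).num : ZMod (l ^ r))
        = ((c : ℚ).num : ZMod (l ^ r)) * ((((c : ℚ).den : ZMod (l ^ r)))⁻¹ *
            (((c : ℚ).den : ZMod (l ^ r)))) := by
          rw [ZMod.inv_mul_of_unit _ hu, mul_one]
      _ = (((c : ℚ).num : ZMod (l ^ r)) * (((c : ℚ).den : ZMod (l ^ r)))⁻¹) *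
            (((c : ℚ).den : ZMod (l ^ r))) := by ring
      _ = 0 := by rw [hcph, zero_mul]
  have hdvd : ((l : ℤ)) ^ r ∣ (c : ℚ).num := by
    have h := (ZMod.intCast_zmod_eq_zero_iff_dvd _ (l ^ r)).mp hnum0
    push_cast at h
    exact h
  obtain ⟨y, hy⟩ := div_mem_l l r c hdvd
  have hofc : DirectSum.of (fun p => primeLocal p) (lp l) c ∈ smulRange G (l ^ r) := by
    rw [← hy, map_nsmul]
    exact ⟨DirectSum.of (fun p => primeLocal p) (lp l) y, by simp⟩
  have := add_mem hc hofc
  simpa using this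

/-- The isomorphism `G/l^r G ≅ ZMod (l^r)`. -/
noncomputable def quotEquiv (r : ℕ) :
    (G ⧸ smulRange G (l ^ r)) ≃+ ZMod (l ^ r) :=
  (QuotientAddGroup.quotientAddEquivOfEq (ker_eq l r).symm).trans
    (QuotientAddGroup.quotientKerEquivOfSurjective (phi l r) (phi_surj l r))

theorem quotEquiv_mk (r : ℕ) (g : G) :
    quotEquiv l r (QuotientAddGroup.mk g) = phi l r g := rfl

theorem map_zmod_inv {m k : ℕ} (f : ZMod m →+* ZMod k) {a : ZMod m} (ha : IsUnit a)
    (hfa : IsUnit (f a)) : f a⁻¹ = (f a)⁻¹ := by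
  have h1 : f a⁻¹ * f a = 1 := by rw [← map_mul, ZMod.inv_mul_of_unit a ha, map_one]
  calc f a⁻¹ = f a⁻¹ * (f a * (f a)⁻¹) := by rw [ZMod.mul_inv_of_unit _ hfa, mul_one]
    _ = (f a⁻¹ * f a) * (f a)⁻¹ := by rw [mul_assoc]
    _ = (f a)⁻¹ := by rw [h1, one_mul]

theorem phi_compat (r : ℕ) (g : G) :
    ZMod.castHom (pow_dvd_pow l (Nat.le_succ r)) (ZMod (l ^ r)) (phi l (r + 1) g) =
      phi l r g := by
  have key : ((ZMod.castHom (pow_dvd_pow l (Nat.le_succ r))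
      (ZMod (l ^ r))).toAddMonoidHom.comp (phi l (r + 1))) = phi l r := by
    refine DirectSum.addHom_ext fun p x => ?_
    simp only [AddMonoidHom.coe_comp, Function.comp_apply]
    rw [phi_of, phi_of]
    by_cases h : (p : ℕ) = l
    · have hd : ¬ l ∣ (x : ℚ).den := by rw [← h]; exact x.2
      rw [psi, dif_pos h, psi, dif_pos h]
      set f := ZMod.castHom (pow_dvd_pow l (Nat.le_succ r)) (ZMod (l ^ r)) with hf
      show f (((x : ℚ).num : ZMod (l ^ (r + 1))) *
          (((x : ℚ).den : ZMod (l ^ (r + 1))))⁻¹) = _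
      have e1 : f (((x : ℚ).num : ZMod (l ^ (r + 1)))) = (((x : ℚ).num : ZMod (l ^ r))) :=
        map_intCast f _
      have eden : f ((((x : ℚ).den : ZMod (l ^ (r + 1))))) = (((x : ℚ).den : ZMod (l ^ r))) :=
        map_natCast f _
      have hfu : IsUnit (f ((((x : ℚ).den : ZMod (l ^ (r + 1)))))) := by
        rw [eden]; exact den_unit l hd
      have e2 : f (((((x : ℚ).den : ZMod (l ^ (r + 1)))))⁻¹) =
          ((((x : ℚ).den : ZMod (l ^ r))))⁻¹ := by
        rw [map_zmod_inv f (den_unit l hd) hfu, eden]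
      rw [map_mul, e1, e2]
      rfl
    · rw [psi_ne l h, psi_ne l h]
      simp
  exact DFunLike.congr_fun key g

theorem trans_comm (r : ℕ) (z : G ⧸ smulRange G (l ^ (r + 1))) :
    quotEquiv l r (transitionMap G l r z) =
      ZMod.castHom (pow_dvd_pow l (Nat.le_succ r)) (ZMod (l ^ r)) (quotEquiv l (r + 1) z) := by
  obtain ⟨g, rfl⟩ := QuotientAddGroup.mk_surjective z
  have h1 : transitionMap G l r (QuotientAddGroup.mk g) = QuotientAddGroup.mk g :=
    QuotientAddGroup.map_mk _ _ _ _ _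
  rw [h1, quotEquiv_mk, quotEquiv_mk, phi_compat]

/-- The ring of compatible sequences in `∏_n ZMod (l^n)`. -/
def compatRing : Subring (∀ n : ℕ, ZMod (l ^ n)) where
  carrier := {a | ∀ n, ZMod.castHom (pow_dvd_pow l (Nat.le_succ n)) (ZMod (l ^ n)) (a (n + 1)) = a n}
  zero_mem' := fun n => by simp
  one_mem' := fun n => by
    exact map_one (ZMod.castHom (pow_dvd_pow l (Nat.le_succ n)) (ZMod (l ^ n)))
  add_mem' := by intro a b ha hb n; simp only [Pi.add_apply, map_add, ha n, hb n]
  mul_mem' := by intro a b ha hb n; simp only [Pi.mul_apply, map_mul, ha n, hb n]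
  neg_mem' := by intro a ha n; simp only [Pi.neg_apply, map_neg, ha n]

/-- Evaluation at level `n`. -/
def evalHom (n : ℕ) : compatRing l →+* ZMod (l ^ n) :=
  (Pi.evalRingHom _ n).comp (compatRing l).subtype

theorem compat_apply (a : compatRing l) :
    ∀ (n m : ℕ) (h : m ≤ n),
      ZMod.castHom (pow_dvd_pow l h) (ZMod (l ^ m)) (a.1 n) = a.1 m := by
  intro n
  induction n with
  | zero =>
    intro m h
    obtain rfl : m = 0 := Nat.le_zero.mp h
    rw [ZMod.castHom_apply]; exact ZMod.cast_id _ _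
  | succ n ih =>
    intro m h
    rcases Nat.lt_succ_iff_lt_or_eq.mp (Nat.lt_succ_of_le h) with h' | rfl
    · have hm : m ≤ n := Nat.lt_succ_iff.mp h'
      have e1 : ZMod.castHom (pow_dvd_pow l h) (ZMod (l ^ m)) (a.1 (n + 1)) =
          ZMod.castHom (pow_dvd_pow l hm) (ZMod (l ^ m))
            (ZMod.castHom (pow_dvd_pow l (Nat.le_succ n)) (ZMod (l ^ n)) (a.1 (n + 1))) :=
        (RingHom.congr_fun (ZMod.castHom_comp (pow_dvd_pow l hm)
          (pow_dvd_pow l (Nat.le_succ n))) (a.1 (n + 1))).symm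
      rw [e1, a.2 n, ih m hm]
    · simp [ZMod.castHom_apply, ZMod.cast_id]

theorem evalHom_compat :
    ∀ (k1 k2 : ℕ) (hk : k1 ≤ k2),
      (ZMod.castHom (pow_dvd_pow l hk) (ZMod (l ^ k1))).comp (evalHom l k2) = evalHom l k1 := by
  intro k1 k2 hk
  ext a
  exact compat_apply l a k2 k1 hk

/-- The lift `compatRing l →+* ℤ_[l]`. -/
noncomputable def toPadic : compatRing l →+* ℤ_[l] :=
  PadicInt.lift (evalHom_compat l)

theorem toPadic_spec (a : compatRing l) (n : ℕ) :
    PadicInt.toZModPow n (toPadic l a) = a.1 n :=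
  RingHom.congr_fun (PadicInt.lift_spec (evalHom_compat l) n) a

/-- The map `ℤ_[l] →+ G^{∧l}`. -/
noncomputable def Phi : ℤ_[l] →+ adicCompletion G l where
  toFun x := ⟨fun r => (quotEquiv l r).symm (PadicInt.toZModPow r x), by
    intro r
    apply (quotEquiv l r).injective
    rw [trans_comm, AddEquiv.apply_symm_apply, AddEquiv.apply_symm_apply,
      ZMod.castHom_apply, PadicInt.cast_toZModPow r (r + 1) (Nat.le_succ r)]⟩
  map_zero' := by
    apply Subtype.ext
    funext r
    show (quotEquiv l r).symm (PadicInt.toZModPow r 0) = 0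
    rw [map_zero, map_zero]
  map_add' := by
    intro x y
    apply Subtype.ext
    funext r
    show (quotEquiv l r).symm (PadicInt.toZModPow r (x + y)) = _
    rw [map_add, map_add]
    rfl

theorem Phi_injective : Function.Injective (Phi l) := by
  rw [injective_iff_map_eq_zero]
  intro x hx
  rw [← PadicInt.ext_of_toZModPow]
  intro n
  rw [map_zero]
  have h : (quotEquiv l n).symm (PadicInt.toZModPow n x) = 0 := by
    have hfun := congrFun (congrArg Subtype.val hx) n
    exact hfun
  have h2 := congrArg (quotEquiv l n) h
  rwa [AddEquiv.apply_symm_apply, map_zero] at h2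

theorem Phi_surjective : Function.Surjective (Phi l) := by
  rintro ⟨a, ha⟩
  have hb : (fun n => quotEquiv l n (a n)) ∈ compatRing l := by
    intro n
    show ZMod.castHom (pow_dvd_pow l (Nat.le_succ n)) (ZMod (l ^ n))
        (quotEquiv l (n + 1) (a (n + 1))) = quotEquiv l n (a n)
    rw [← ha n, trans_comm]
  refine ⟨toPadic l ⟨fun n => quotEquiv l n (a n), hb⟩, ?_⟩
  apply Subtype.ext
  funext r
  show (quotEquiv l r).symm (PadicInt.toZModPow r (toPadic l _)) = a r
  rw [toPadic_spec]
  exact (quotEquiv l r).symm_apply_apply (a r)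

/-- The completion of `G` is isomorphic to the `l`-adic integers. -/
noncomputable def completionEquiv : (adicCompletion G l) ≃+ ℤ_[l] :=
  (AddEquiv.ofBijective (Phi l) ⟨Phi_injective l, Phi_surjective l⟩).symm

end Stmt8Aux

/-- For `G = ⊕_p ℤ_(p)` and any prime `l`, the quotient `G/l^r G` is cyclic of order
`l^r` for every `r ≥ 1`, and consequently the `l`-adic completion of `G` is
isomorphic, as an additive group, to the `l`-adic integers `ℤ_l`. -/
theorem stmt_8 (l : ℕ) [hl : Fact l.Prime] :
    (∀ r : ℕ, 1 ≤ r →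
      Nonempty ((sumOfLocalizations ⧸ smulRange sumOfLocalizations (l ^ r)) ≃+
        ZMod (l ^ r))) ∧
      Nonempty (adicCompletion sumOfLocalizations l ≃+ ℤ_[l]) := by
  exact ⟨fun r _ => ⟨Stmt8Aux.quotEquiv l r⟩, ⟨Stmt8Aux.completionEquiv l⟩⟩
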